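/- In the no-limit clairvoyance game with stack size n, the strategy profile where player 1 bets n with probability 1 with a winning hand and with probability n/(1+n) with a losing hand (checking otherwise), and player 2 calls a bet of size x with probability 1/(1+x) for all x in (0,n], is a Nash equilibrium. -/
import Mathlib


/-!  A concrete model of the no-limit clairvoyance game with integer bet sizes.
Player 1 is dealt a winning hand (`true`) or losing hand (`false`) with probability
1/2 each, bets an integer `x ∈ {0,…,n}` (0 = check), and player 2 calls or folds.
A strategy for player 1 assigns to each hand a probability distribution over bet
sizes; a strategy for player 2 assigns to each bet size a calling probability. -/

/-- `s` is a valid strategy for player 1 in the clairvoyance game with stack `n`. -/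
def IsStrat1 (n : ℕ) (s : Bool → ℕ → ℝ) : Prop :=
  (∀ h x, 0 ≤ s h x) ∧ (∀ h : Bool, ∑ x ∈ Finset.range (n + 1), s h x = 1)

/-- `s` is a valid strategy for player 2 (a calling probability for each bet size). -/
def IsStrat2 (n : ℕ) (s : ℕ → ℝ) : Prop :=
  ∀ x, 0 ≤ s x ∧ s x ≤ 1

/-- Player 1's payoff with hand `h` after betting `x`, when player 2 calls a bet of
size `x` with probability `s2 x`: a check yields ±0.5, a called bet of `x` yields
±(0.5 + x), and a fold yields +0.5. -/
noncomputable def pay (s2 : ℕ → ℝ) (h : Bool) (x : ℕ) : ℝ :=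
  if x = 0 then (if h then 0.5 else -0.5)
  else s2 x * (if h then (0.5 + (x : ℝ)) else -(0.5 + (x : ℝ))) + (1 - s2 x) * 0.5

/-- Player 1's expected payoff (hands equiprobable); the game is zero-sum. -/
noncomputable def u1 (n : ℕ) (s1 : Bool → ℕ → ℝ) (s2 : ℕ → ℝ) : ℝ :=
  (1/2) * ∑ x ∈ Finset.range (n + 1), s1 true x * pay s2 true x
    + (1/2) * ∑ x ∈ Finset.range (n + 1), s1 false x * pay s2 false x

/-- `(s1, s2)` is a Nash equilibrium of the (zero-sum) clairvoyance game:
no unilateral profitable deviation. -/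
def IsNash (n : ℕ) (s1 : Bool → ℕ → ℝ) (s2 : ℕ → ℝ) : Prop :=
  IsStrat1 n s1 ∧ IsStrat2 n s2 ∧
  (∀ s1', IsStrat1 n s1' → u1 n s1' s2 ≤ u1 n s1 s2) ∧
  (∀ s2', IsStrat2 n s2' → u1 n s1 s2 ≤ u1 n s1 s2')

/-- In the no-limit clairvoyance game with stack size `n`, the profile where player 1
bets `n` with probability 1 with a winning hand and with probability `n/(1+n)` with a
losing hand (checking otherwise), and player 2 calls a bet of size `x ∈ (0,n]` with
probability `1/(1+x)`, is a Nash equilibrium. -/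
theorem clairvoyance_equilibrium (n : ℕ) (hn : 1 ≤ n)
    (s1 : Bool → ℕ → ℝ)
    (hs1 : s1 = fun h x => if h then (if x = n then 1 else 0)
      else (if x = n then (n : ℝ) / (1 + n) else if x = 0 then 1 - (n : ℝ) / (1 + n) else 0))
    (s2 : ℕ → ℝ) (hs2 : ∀ x, 1 ≤ x → x ≤ n → s2 x = 1 / (1 + (x : ℝ)))
    (hs2' : IsStrat2 n s2) :
    IsNash n s1 s2 := by
  subst hs1
  have hn0 : (0:ℝ) < 1 + n := by positivity
  set a : ℝ := (n:ℝ)/(1+n) with ha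
  have ha0 : 0 ≤ a := by positivity
  have ha1 : a ≤ 1 := by rw [ha, div_le_one hn0]; linarith
  have hne : n ≠ 0 := by omega
  clear_value a
  have hmem : n ∈ Finset.range (n+1) := Finset.self_mem_range_succ n
  -- pay facts under the equilibrium s2
  have payf : ∀ x, x ≤ n → pay s2 false x = -0.5 := by
    intro x hx
    rcases Nat.eq_zero_or_pos x with h0 | h1
    · simp [pay, h0]
    · have hxne : x ≠ 0 := by omega
      have hx0 : (0:ℝ) < 1 + x := by positivity
      simp only [pay, if_neg hxne, Bool.false_eq_true, if_false]
      rw [hs2 x h1 hx]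
      field_simp
      ring
  have payt : ∀ x, 1 ≤ x → x ≤ n → pay s2 true x = 0.5 + (x:ℝ)/(1+x) := by
    intro x h1 hx
    have hxne : x ≠ 0 := by omega
    have hx0 : (0:ℝ) < 1 + x := by positivity
    simp only [pay, if_neg hxne, if_true]
    rw [hs2 x h1 hx]
    field_simp
    ring
  have paytn : pay s2 true n = 0.5 + a := by rw [payt n hn le_rfl, ha]
  have payt_le : ∀ x, x ≤ n → pay s2 true x ≤ 0.5 + a := by
    intro x hx
    rcases Nat.eq_zero_or_pos x with h0 | h1
    · simp only [pay, h0, if_true]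
      norm_num
      linarith
    · rw [payt x h1 hx]
      have hx0 : (0:ℝ) < 1 + x := by positivity
      have hxn : (x:ℝ) ≤ n := Nat.cast_le.mpr hx
      have : (x:ℝ)/(1+x) ≤ (n:ℝ)/(1+n) := by
        rw [div_le_div_iff₀ hx0 hn0]
        nlinarith
      linarith
  -- sum lemmas
  have sumt : ∀ t : ℕ → ℝ, ∑ x ∈ Finset.range (n+1),
      (if x = n then (1:ℝ) else 0) * pay t true x = pay t true n := by
    intro t
    rw [Finset.sum_eq_single_of_mem n hmem]
    · simp
    · intro b _ hb; simp [hb]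
  have sumf2 : ∀ t : ℕ → ℝ, ∑ x ∈ Finset.range (n+1),
      (if x = n then a else if x = 0 then 1 - a else 0) * pay t false x
      = a * pay t false n + (1 - a) * pay t false 0 := by
    intro t
    have hpt : ∀ x ∈ Finset.range (n+1),
        (if x = n then a else if x = 0 then 1 - a else 0) * pay t false x
        = (if x = n then a * pay t false n else 0)
          + (if x = 0 then (1 - a) * pay t false 0 else 0) := by
      intro x _
      rcases eq_or_ne x n with rfl | hxn
      · simp [hne]
      · rcases eq_or_ne x 0 with rfl | hx0
        · simp [Ne.symm hne, hxn]
        · simp [hxn, hx0]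
    rw [Finset.sum_congr rfl hpt, Finset.sum_add_distrib,
      Finset.sum_ite_eq' (Finset.range (n+1)) n (fun _ => a * pay t false n),
      Finset.sum_ite_eq' (Finset.range (n+1)) 0 (fun _ => (1 - a) * pay t false 0)]
    simp [hmem, Finset.mem_range]
  have sumf : ∀ g : ℕ → ℝ, (∑ x ∈ Finset.range (n+1), g x = 1) →
      ∑ x ∈ Finset.range (n+1), g x * pay s2 false x = -0.5 := by
    intro g hg
    have hgx : ∀ x ∈ Finset.range (n+1), g x * pay s2 false x = g x * (-0.5) := by
      intro x hx
      rw [payf x (Nat.lt_succ_iff.mp (Finset.mem_range.mp hx))]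
    rw [Finset.sum_congr rfl hgx, ← Finset.sum_mul, hg, one_mul]
  -- the equilibrium value
  have hval : u1 n (fun h x => if h = true then if x = n then (1:ℝ) else 0
      else if x = n then a else if x = 0 then 1 - a else 0) s2
      = (1/2) * (0.5 + a) + (1/2) * (-0.5) := by
    simp only [u1, if_true, Bool.false_eq_true, if_false]
    rw [sumt s2, sumf2 s2, paytn, payf n le_rfl, payf 0 (Nat.zero_le n)]
    ring
  refine ⟨⟨?_, ?_⟩, hs2', ?_, ?_⟩
  · intro h x
    cases h <;> simp only [Bool.false_eq_true, if_true, if_false] <;> split_ifs <;>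
      first
      | exact ha0
      | exact le_refl 0
      | exact zero_le_one
      | exact sub_nonneg.mpr ha1
  · intro h
    cases h
    · simp only [Bool.false_eq_true, if_false]
      have hpt : ∀ x ∈ Finset.range (n+1),
          (if x = n then a else if x = 0 then 1 - a else 0)
          = (if x = n then a else 0) + (if x = 0 then 1 - a else 0) := by
        intro x _
        rcases eq_or_ne x n with rfl | hxn
        · simp [hne]
        · rcases eq_or_ne x 0 with rfl | hx0
          · simp [Ne.symm hne, hxn]
          · simp [hxn, hx0]
      rw [Finset.sum_congr rfl hpt, Finset.sum_add_distrib,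
        Finset.sum_ite_eq' (Finset.range (n+1)) n (fun _ => a),
        Finset.sum_ite_eq' (Finset.range (n+1)) 0 (fun _ => 1 - a)]
      simp [hmem, Finset.mem_range]
    · simp only [if_true]
      rw [Finset.sum_ite_eq' (Finset.range (n+1)) n (fun _ => (1:ℝ))]
      simp [hmem]
  · -- player 1 cannot deviate profitably
    intro s1' hs1'
    obtain ⟨h0, h1⟩ := hs1'
    rw [hval]
    simp only [u1]
    have ht : ∑ x ∈ Finset.range (n+1), s1' true x * pay s2 true x
        ≤ 0.5 + a := by
      calc ∑ x ∈ Finset.range (n+1), s1' true x * pay s2 true x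
          ≤ ∑ x ∈ Finset.range (n+1), s1' true x * (0.5 + a) :=
            Finset.sum_le_sum (fun x hx => mul_le_mul_of_nonneg_left
              (payt_le x (Nat.lt_succ_iff.mp (Finset.mem_range.mp hx))) (h0 true x))
        _ = 0.5 + a := by rw [← Finset.sum_mul, h1 true, one_mul]
    have hf := sumf (s1' false) (h1 false)
    rw [hf]
    linarith
  · -- player 2 cannot deviate profitably
    intro s2' _
    rw [hval]
    simp only [u1, if_true, Bool.false_eq_true, if_false]
    rw [sumt s2', sumf2 s2']
    have hp0 : pay s2' false 0 = -0.5 := by simp [pay]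
    have hptn : pay s2' true n = s2' n * (0.5 + (n:ℝ)) + (1 - s2' n) * 0.5 := by
      simp [pay, hne]
    have hpfn : pay s2' false n = s2' n * (-(0.5 + (n:ℝ))) + (1 - s2' n) * 0.5 := by
      simp [pay, hne]
    rw [hp0, hptn, hpfn, ha]
    apply le_of_eq
    field_simp
    ring
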